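/- With the definitions below, the following identity holds: ∑_{i ∈ Fin n} k i · ( ∑_{a ∈ U i} π i a · ( q i a − (α / k i) · log(π i a) ) ) + b = ∑_{a ∈ Π_{i} U i} π(a) · Q_tot(a) − α · ∑_{a ∈ Π_{i} U i} π(a) · log(π(a)). That is, feeding the entropy-regularized local utilities q_i − α_i · log π_i with per-agent temperatures α_i = α / k_i into a one-layer linear mixing network with positive weights k_i and bias b yields exactly the soft (maximum-entropy) joint objective E_π[Q_tot] − α · E_π[log π] of factorized soft policy iteration. -/

import Mathlib

open Finset

lemma pi_expect_sum {n : ℕ} (U : Fin n → Type*) [∀ i, Fintype (U i)]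
    (pol : ∀ i, U i → ℝ) (f : ∀ i, U i → ℝ)
    (hpol_sum : ∀ i, ∑ a : U i, pol i a = 1) :
    ∑ a : (∀ i, U i), (∏ i : Fin n, pol i (a i)) * (∑ i : Fin n, f i (a i))
      = ∑ i : Fin n, ∑ x : U i, pol i x * f i x := by
  have key : ∀ j : Fin n,
      ∑ a : (∀ i, U i), (∏ i : Fin n, pol i (a i)) * f j (a j)
        = ∑ x : U j, pol j x * f j x := by
    intro j
    have h1 : ∀ a : (∀ i, U i),
        (∏ i : Fin n, pol i (a i)) * f j (a j)
          = ∏ i : Fin n, (pol i (a i) * (if i = j then f i (a i) else 1)) := by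
      intro a
      rw [Finset.prod_mul_distrib]
      congr 1
      rw [Finset.prod_ite_eq' Finset.univ j (fun i => f i (a i))]
      simp
    simp_rw [h1]
    rw [← Fintype.prod_sum (fun i x => pol i x * (if i = j then f i x else 1))]
    have h2 : ∀ i : Fin n, (∑ x : U i, pol i x * (if i = j then f i x else 1))
        = if i = j then ∑ x : U i, pol i x * f i x else 1 := by
      intro i
      by_cases h : i = j <;> simp [h, hpol_sum i]
    simp_rw [h2]
    rw [Finset.prod_ite_eq' Finset.univ j (fun i => ∑ x : U i, pol i x * f i x)]
    simp
  calc ∑ a : (∀ i, U i), (∏ i : Fin n, pol i (a i)) * (∑ i : Fin n, f i (a i))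
      = ∑ a : (∀ i, U i), ∑ j : Fin n, (∏ i : Fin n, pol i (a i)) * f j (a j) := by
        simp_rw [Finset.mul_sum]
    _ = ∑ j : Fin n, ∑ a : (∀ i, U i), (∏ i : Fin n, pol i (a i)) * f j (a j) :=
        Finset.sum_comm
    _ = ∑ i : Fin n, ∑ x : U i, pol i x * f i x := by
        exact Finset.sum_congr rfl fun j _ => key j

/-- **Factorized soft policy iteration identity.**
Feeding the entropy-regularized local utilities `q i − (α / k i) · log (pol i)` (per-agent
temperature `α i = α / k i`) into a one-layer linear mixing network with positive weights
`k i` and bias `b` yields exactly the soft (maximum-entropy) joint objective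
`E_π[Q_tot] − α · E_π[log π]`, where the joint policy is `π(a) = ∏ i, pol i (a i)` and the
joint action value is `Q_tot(a) = ∑ i, k i * q i (a i) + b`. -/
theorem factorized_soft_policy_iteration_identity
    {n : ℕ} (U : Fin n → Type*) [∀ i, Fintype (U i)] [∀ i, Nonempty (U i)]
    (pol : ∀ i, U i → ℝ) (q : ∀ i, U i → ℝ) (k : Fin n → ℝ) (b α : ℝ)
    (hpol_pos : ∀ i a, 0 < pol i a)
    (hpol_sum : ∀ i, ∑ a : U i, pol i a = 1)
    (hk : ∀ i, 0 < k i) :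
    (∑ i : Fin n, k i *
        (∑ a : U i, pol i a * (q i a - (α / k i) * Real.log (pol i a)))) + b
      = (∑ a : (∀ i, U i), (∏ i : Fin n, pol i (a i)) *
            ((∑ i : Fin n, k i * q i (a i)) + b))
        - α * ∑ a : (∀ i, U i),
            (∏ i : Fin n, pol i (a i)) * Real.log (∏ i : Fin n, pol i (a i)) := by
  have hπ1 : ∑ a : (∀ i, U i), ∏ i : Fin n, pol i (a i) = 1 := by
    rw [← Fintype.prod_sum]
    simp [hpol_sum]
  have hlog : ∀ a : (∀ i, U i),
      Real.log (∏ i : Fin n, pol i (a i)) = ∑ i : Fin n, Real.log (pol i (a i)) := by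
    intro a
    exact Real.log_prod (fun i _ => (hpol_pos i (a i)).ne')
  -- rewrite RHS
  have hRHS1 : ∑ a : (∀ i, U i), (∏ i : Fin n, pol i (a i)) *
      ((∑ i : Fin n, k i * q i (a i)) + b)
      = (∑ i : Fin n, ∑ x : U i, pol i x * (k i * q i x)) + b := by
    simp_rw [mul_add, Finset.sum_add_distrib, ← Finset.sum_mul, hπ1, one_mul]
    rw [pi_expect_sum U pol (fun i x => k i * q i x) hpol_sum]
  have hRHS2 : ∑ a : (∀ i, U i),
      (∏ i : Fin n, pol i (a i)) * Real.log (∏ i : Fin n, pol i (a i))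
      = ∑ i : Fin n, ∑ x : U i, pol i x * Real.log (pol i x) := by
    simp_rw [hlog]
    exact pi_expect_sum U pol (fun i x => Real.log (pol i x)) hpol_sum
  rw [hRHS1, hRHS2]
  have hterm : ∀ i : Fin n, k i * ∑ a : U i, pol i a * (q i a - α / k i * Real.log (pol i a))
      = (∑ x : U i, pol i x * (k i * q i x)) - α * ∑ x : U i, pol i x * Real.log (pol i x) := by
    intro i
    rw [Finset.mul_sum, Finset.mul_sum, ← Finset.sum_sub_distrib]
    apply Finset.sum_congr rfl
    intro x _
    have hki : k i ≠ 0 := (hk i).ne'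
    field_simp
  simp_rw [hterm]
  rw [Finset.sum_sub_distrib, Finset.mul_sum]
  ring
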